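/- Let H_0, ..., H_{K-1} be symmetric d×d matrices with ‖H_k‖ ≤ H, α > 0, g ∈ R^d, and 0 ≤ L ≤ K. Define the truncated binomial estimate Ĝ = [I + Σ_{l=1}^{L} Σ_{0≤k_1<...<k_l<K} ∏_{i=1}^{l}(-α H_{k_i})] g. Then ‖∏_{k=0}^{K-1}(I - α H_k) g - Ĝ‖ ≤ Σ_{l=L+1}^{K} C(K, l) (αH)^l ‖g‖. -/

import Mathlib

set_option synthInstance.maxHeartbeats 1000000
set_option maxHeartbeats 1000000


open Matrix Finset

variable {d : ℕ}

/-- Operator (spectral) norm of a real `d × d` matrix, acting on Euclidean space. -/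
noncomputable def matOpNorm (M : Matrix (Fin d) (Fin d) ℝ) : ℝ :=
  ‖Matrix.toEuclideanCLM (𝕜 := ℝ) M‖

/-- Apply a matrix to a vector of Euclidean space. -/
noncomputable def applyM (M : Matrix (Fin d) (Fin d) ℝ) (g : EuclideanSpace ℝ (Fin d)) :
    EuclideanSpace ℝ (Fin d) :=
  Matrix.toEuclideanCLM (𝕜 := ℝ) M g

/-- Ordered product `∏_{k=a}^{a+n-1} (I - α H k)`, factors ordered by increasing `k`. -/
def mulList (H : ℕ → Matrix (Fin d) (Fin d) ℝ) (α : ℝ) (a n : ℕ) :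
    Matrix (Fin d) (Fin d) ℝ :=
  ((List.range' a n).map (fun k => (1 : Matrix (Fin d) (Fin d) ℝ) - α • H k)).prod

/-- Truncated binomial expansion
`I + Σ_{l=1}^{L} Σ_{0 ≤ k₁ < … < k_l < K} ∏_{i=1}^{l} (-α H_{k_i})`,
with each inner product ordered by increasing index. -/
def binomSum (H : ℕ → Matrix (Fin d) (Fin d) ℝ) (α : ℝ) (K L : ℕ) :
    Matrix (Fin d) (Fin d) ℝ :=
  1 + ∑ l ∈ Finset.Icc 1 L, ∑ s ∈ (Finset.range K).powersetCard l,
      ((s.sort (· ≤ ·)).map (fun k => -(α • H k))).prod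

lemma sort_insert_max' {s : Finset ℕ} {K : ℕ} (h : ∀ x ∈ s, x < K) :
    (insert K s).sort (· ≤ ·) = s.sort (· ≤ ·) ++ [K] := by
  have hK : K ∉ s := fun hKs => lt_irrefl K (h K hKs)
  refine (fun hp h1 h2 => List.Perm.eq_of_pairwise' (r := (· ≤ ·)) h1 h2 hp) ?_ ?_ ?_
  · exact (((Finset.sort_perm_toList _ _).trans (Finset.toList_insert hK)).trans
      (List.Perm.cons _ (Finset.sort_perm_toList _ _).symm)).trans
      (List.perm_append_comm (l₁ := [K]))
  · exact Finset.pairwise_sort _ _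
  · rw [List.pairwise_append]
    refine ⟨Finset.pairwise_sort _ _, List.pairwise_singleton _ _, ?_⟩
    intro x hx y hy
    simp only [List.mem_singleton] at hy
    subst hy
    exact (h x ((Finset.mem_sort _).mp hx)).le

lemma expand_aux {R : Type*} [Ring R] (A : ℕ → R) :
    ∀ K : ℕ, ((List.range K).map (fun k => 1 + A k)).prod
      = ∑ s ∈ (Finset.range K).powerset, ((s.sort (· ≤ ·)).map A).prod := by
  intro K
  induction K with
  | zero => simp
  | succ K ih =>
    rw [List.range_succ, List.map_append, List.prod_append, ih]
    rw [Finset.range_add_one, Finset.sum_powerset_insert (by simp)]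
    have h2 : ∑ t ∈ (Finset.range K).powerset,
        (((insert K t).sort (· ≤ ·)).map A).prod
        = (∑ t ∈ (Finset.range K).powerset, ((t.sort (· ≤ ·)).map A).prod) * A K := by
      rw [Finset.sum_mul]
      refine Finset.sum_congr rfl fun s hs => ?_
      rw [sort_insert_max' (fun x hx => Finset.mem_range.mp (Finset.mem_powerset.mp hs hx))]
      rw [List.map_append, List.prod_append]
      simp
    rw [h2]
    simp [mul_add]

lemma norm_toCLM_list_prod {c : ℝ} (hc : 0 ≤ c) (A : ℕ → Matrix (Fin d) (Fin d) ℝ)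
    (hA : ∀ k, ‖Matrix.toEuclideanCLM (𝕜 := ℝ) (A k)‖ ≤ c) :
    ∀ ls : List ℕ, ‖Matrix.toEuclideanCLM (𝕜 := ℝ) ((ls.map A).prod)‖ ≤ c ^ ls.length := by
  intro ls
  induction ls with
  | nil =>
    rw [List.map_nil, List.prod_nil, _root_.map_one, List.length_nil, pow_zero,
      ContinuousLinearMap.one_def]
    exact ContinuousLinearMap.norm_id_le
  | cons k tl ih =>
    rw [List.map_cons, List.prod_cons, _root_.map_mul, List.length_cons, pow_succ']
    exact le_trans (norm_mul_le _ _)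
      (mul_le_mul (hA k) ih (norm_nonneg _) hc)

lemma sum_range_split {M : Type*} [AddCommGroup M] (S : ℕ → M) {L K : ℕ} (h : L ≤ K) :
    ∑ l ∈ Finset.range (K + 1), S l - ∑ l ∈ Finset.range (L + 1), S l
      = ∑ l ∈ Finset.Icc (L + 1) K, S l := by
  rw [Finset.range_eq_Ico,
    ← Finset.sum_Ico_consecutive S (Nat.zero_le (L + 1)) (by omega), Finset.Ico_add_one_right_eq_Icc (L + 1), Finset.range_eq_Ico]
  abel

lemma sum_range_head {M : Type*} [AddCommMonoid M] (S : ℕ → M) (L : ℕ) :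
    ∑ l ∈ Finset.range (L + 1), S l = S 0 + ∑ l ∈ Finset.Icc 1 L, S l := by
  rw [Finset.range_eq_Ico, ← Finset.sum_Ico_consecutive S (Nat.zero_le 1) (by omega),
    Finset.Ico_add_one_right_eq_Icc]
  congr 1
  simp

/-- BinomMAML error bound under the Lipschitz-gradient assumption:
`‖∏_{k=0}^{K-1}(I - α H_k) g - Ĝ‖ ≤ Σ_{l=L+1}^{K} C(K,l) (αH)^l ‖g‖`. -/
theorem binommaml_error_bound_smooth (K L : ℕ) (Hm : ℕ → Matrix (Fin d) (Fin d) ℝ) (α H : ℝ)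
    (hsymm : ∀ k, (Hm k).IsSymm) (hnorm : ∀ k, matOpNorm (Hm k) ≤ H) (hα : 0 < α)
    (hL : L ≤ K) (g : EuclideanSpace ℝ (Fin d)) :
    ‖applyM (mulList Hm α 0 K) g - applyM (binomSum Hm α K L) g‖
      ≤ (∑ l ∈ Finset.Icc (L + 1) K, (K.choose l : ℝ) * (α * H) ^ l) * ‖g‖ := by
  set A : ℕ → Matrix (Fin d) (Fin d) ℝ := fun k => -(α • Hm k) with hA
  set f : Finset ℕ → Matrix (Fin d) (Fin d) ℝ :=
    fun s => ((s.sort (· ≤ ·)).map A).prod with hf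
  have hH : 0 ≤ H := le_trans (norm_nonneg _) (hnorm 0)
  have hαH : 0 ≤ α * H := mul_nonneg hα.le hH
  -- expansion of the product
  have hmul : mulList Hm α 0 K = ∑ l ∈ Finset.range (K + 1),
      ∑ s ∈ (Finset.range K).powersetCard l, f s := by
    have : mulList Hm α 0 K = ((List.range K).map (fun k => 1 + A k)).prod := by
      rw [mulList, ← List.range_eq_range']
      exact congrArg List.prod
        (List.map_congr_left fun k _ => by rw [hA, sub_eq_add_neg])
    rw [this, expand_aux, Finset.sum_powerset, Finset.card_range]
  -- binomSum as a truncated sum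
  have hbin : binomSum Hm α K L = ∑ l ∈ Finset.range (L + 1),
      ∑ s ∈ (Finset.range K).powersetCard l, f s := by
    rw [binomSum, sum_range_head]
    simp [hf, hA]
  -- difference
  have hdiff : mulList Hm α 0 K - binomSum Hm α K L
      = ∑ l ∈ Finset.Icc (L + 1) K, ∑ s ∈ (Finset.range K).powersetCard l, f s := by
    rw [hmul, hbin]
    exact sum_range_split _ hL
  -- norm bound on each A k
  have hAk : ∀ k, ‖Matrix.toEuclideanCLM (𝕜 := ℝ) (A k)‖ ≤ α * H := by
    intro k
    have h1 : (Matrix.toEuclideanCLM (𝕜 := ℝ)) (A k)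
        = -(α • (Matrix.toEuclideanCLM (𝕜 := ℝ) (Hm k))) := by
      rw [hA]; simp only [map_neg, _root_.map_smul]
    rw [h1, norm_neg]
    calc ‖α • (Matrix.toEuclideanCLM (𝕜 := ℝ) (Hm k))‖
        ≤ ‖α‖ * ‖Matrix.toEuclideanCLM (𝕜 := ℝ) (Hm k)‖ := ContinuousLinearMap.opNorm_smul_le α _
      _ = α * ‖Matrix.toEuclideanCLM (𝕜 := ℝ) (Hm k)‖ := by
          rw [Real.norm_eq_abs, abs_of_pos hα]
      _ ≤ α * H := mul_le_mul_of_nonneg_left (hnorm k) hα.le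
  -- operator norm bound on the difference
  have hopnorm : matOpNorm (mulList Hm α 0 K - binomSum Hm α K L)
      ≤ ∑ l ∈ Finset.Icc (L + 1) K, (K.choose l : ℝ) * (α * H) ^ l := by
    rw [matOpNorm, hdiff, map_sum]
    refine le_trans (norm_sum_le _ _) (Finset.sum_le_sum fun l _ => ?_)
    rw [map_sum]
    refine le_trans (norm_sum_le _ _) ?_
    have hterm : ∀ s ∈ (Finset.range K).powersetCard l,
        ‖Matrix.toEuclideanCLM (𝕜 := ℝ) (f s)‖ ≤ (α * H) ^ l := by
      intro s hs
      have hcard : (s.sort (· ≤ ·)).length = l := by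
        rw [Finset.length_sort]
        exact (Finset.mem_powersetCard.mp hs).2
      calc ‖Matrix.toEuclideanCLM (𝕜 := ℝ) (f s)‖
          ≤ (α * H) ^ (s.sort (· ≤ ·)).length := norm_toCLM_list_prod hαH A hAk _
        _ = (α * H) ^ l := by rw [hcard]
    calc ∑ s ∈ (Finset.range K).powersetCard l, ‖Matrix.toEuclideanCLM (𝕜 := ℝ) (f s)‖
        ≤ ∑ _s ∈ (Finset.range K).powersetCard l, (α * H) ^ l := Finset.sum_le_sum hterm
      _ = (K.choose l : ℝ) * (α * H) ^ l := by
          rw [Finset.sum_const, Finset.card_powersetCard, Finset.card_range, nsmul_eq_mul]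
  -- finish
  have happ : applyM (mulList Hm α 0 K) g - applyM (binomSum Hm α K L) g
      = applyM (mulList Hm α 0 K - binomSum Hm α K L) g := by
    rw [applyM, applyM, applyM, map_sub]
    rfl
  rw [happ, applyM]
  calc ‖Matrix.toEuclideanCLM (𝕜 := ℝ) (mulList Hm α 0 K - binomSum Hm α K L) g‖
      ≤ matOpNorm (mulList Hm α 0 K - binomSum Hm α K L) * ‖g‖ :=
        ContinuousLinearMap.le_opNorm _ g
    _ ≤ (∑ l ∈ Finset.Icc (L + 1) K, (K.choose l : ℝ) * (α * H) ^ l) * ‖g‖ :=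
        mul_le_mul_of_nonneg_right hopnorm (norm_nonneg g)
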